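/- arXiv:1512.08952 — 2 statements merged into one kernel-verified Lean document; each statement's English description precedes it below -/
import Mathlib

section
/- Let u, v be nonnegative Borel measurable functions on ℝ^N vanishing at infinity. Then for every 1 ≤ p < ∞, ∫_{ℝ^N} |{u,v}⋆|^p dx = ∫_{ℝ^N} |u|^p dx + ∫_{ℝ^N} |v|^p dx (where both sides may be infinite). -/
noncomputable section

open MeasureTheory Filter Topology
open scoped ENNReal

abbrev EN (N : ℕ) := EuclideanSpace ℝ (Fin N)

/-- A Borel measurable function `u` on `ℝ^N` vanishes at infinity if
`|{x : |u x| > t}| < ∞` for every `t > 0`. -/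
def VanishAtInfinity {N : ℕ} (u : EN N → ℝ) : Prop :=
  ∀ t : ℝ, 0 < t → volume {x : EN N | t < |u x|} < ⊤

/-- `A⋆(u,v;t)`: the open ball `B(0,r)` centered at the origin whose volume equals
`|{u > t}| + |{v > t}|`. -/
def Astar {N : ℕ} (u v : EN N → ℝ) (t : ℝ) : Set (EN N) :=
  Metric.ball 0 (sInf {r : ℝ | 0 ≤ r ∧
    volume {x : EN N | t < u x} + volume {x : EN N | t < v x}
      ≤ volume (Metric.ball (0 : EN N) r)})

/-- The rearrangement `{u,v}⋆(x) = ∫₀^∞ χ_{A⋆(u,v;t)}(x) dt` of Shibata. -/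
def rearr {N : ℕ} (u v : EN N → ℝ) (x : EN N) : ℝ :=
  ∫ t in Set.Ioi (0 : ℝ), (Astar u v t).indicator (fun _ => (1 : ℝ)) x

set_option linter.unusedSectionVars false

namespace RearrAux

open Set Metric

variable {N : ℕ}

def Bv (N : ℕ) (r : ℝ) : ℝ≥0∞ := volume (Metric.ball (0 : EN N) r)

def mf (u v : EN N → ℝ) (t : ℝ) : ℝ≥0∞ :=
  volume {x : EN N | t < u x} + volume {x : EN N | t < v x}

def Rad (u v : EN N → ℝ) (t : ℝ) : ℝ :=
  sInf {r : ℝ | 0 ≤ r ∧ mf u v t ≤ Bv N r}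

lemma Astar_eq (u v : EN N → ℝ) (t : ℝ) :
    Astar u v t = Metric.ball (0 : EN N) (Rad u v t) := rfl

lemma nontrivialEN (hN : 1 ≤ N) : Nontrivial (EN N) := by
  have : Nonempty (Fin N) := ⟨⟨0, hN⟩⟩
  refine ⟨0, EuclideanSpace.single ⟨0, hN⟩ 1, fun h => ?_⟩
  have := congrArg (fun f : EN N => f ⟨0, hN⟩) h
  simp [EuclideanSpace.single_apply] at this

lemma Bv_one_pos : 0 < Bv N 1 := measure_ball_pos _ _ one_pos

lemma Bv_lt_top (r : ℝ) : Bv N r < ⊤ := measure_ball_lt_top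

lemma Bv_mono {r r' : ℝ} (h : r ≤ r') : Bv N r ≤ Bv N r' :=
  measure_mono (Metric.ball_subset_ball h)

lemma Bv_eq (hN : 1 ≤ N) {r : ℝ} (hr : 0 ≤ r) :
    Bv N r = ENNReal.ofReal (r ^ N) * Bv N 1 := by
  haveI := nontrivialEN hN
  rw [Bv, Measure.addHaar_ball _ _ hr, finrank_euclideanSpace_fin]
  rfl

lemma Bv_strictLt (hN : 1 ≤ N) {r r' : ℝ} (hr : 0 ≤ r) (h : r < r') :
    Bv N r < Bv N r' := by
  rw [Bv_eq hN hr, Bv_eq hN (hr.trans h.le)]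
  have hNne : N ≠ 0 := by omega
  rw [mul_comm _ (Bv N 1), mul_comm _ (Bv N 1)]
  refine ENNReal.mul_lt_mul_right Bv_one_pos.ne' (Bv_lt_top 1).ne ?_
  exact (ENNReal.ofReal_lt_ofReal_iff (pow_pos (hr.trans_lt h) N)).mpr
    (pow_lt_pow_left₀ h hr hNne)

lemma exists_radius (hN : 1 ≤ N) {m : ℝ≥0∞} (hm : m ≠ ⊤) :
    ∃ r : ℝ, 0 ≤ r ∧ Bv N r = m := by
  have hb0 : 0 < (Bv N 1).toReal :=
    ENNReal.toReal_pos Bv_one_pos.ne' (Bv_lt_top 1).ne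
  have hd : 0 ≤ m.toReal / (Bv N 1).toReal := by positivity
  refine ⟨(m.toReal / (Bv N 1).toReal) ^ (1 / (N : ℝ)), Real.rpow_nonneg hd _, ?_⟩
  rw [Bv_eq hN (Real.rpow_nonneg hd _)]
  have hNne : (N : ℝ) ≠ 0 := by positivity
  have hpow : ((m.toReal / (Bv N 1).toReal) ^ (1 / (N : ℝ))) ^ N
      = m.toReal / (Bv N 1).toReal := by
    rw [← Real.rpow_natCast ((m.toReal / (Bv N 1).toReal) ^ (1 / (N : ℝ))) N,
      ← Real.rpow_mul hd, one_div, inv_mul_cancel₀ hNne, Real.rpow_one]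
  rw [hpow, ENNReal.ofReal_div_of_pos hb0, ENNReal.ofReal_toReal hm,
    ENNReal.ofReal_toReal (Bv_lt_top 1).ne]
  exact ENNReal.div_mul_cancel Bv_one_pos.ne' (Bv_lt_top 1).ne

lemma mf_antitone (u v : EN N → ℝ) : Antitone (mf u v) := by
  intro t t' h
  exact add_le_add (measure_mono fun x hx => lt_of_le_of_lt h hx)
    (measure_mono fun x hx => lt_of_le_of_lt h hx)

lemma mf_lt_top {u v : EN N → ℝ} (hu0 : ∀ x, 0 ≤ u x) (hv0 : ∀ x, 0 ≤ v x)
    (huv : VanishAtInfinity u) (hvv : VanishAtInfinity v) {t : ℝ} (ht : 0 < t) :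
    mf u v t < ⊤ := by
  have h1 : {x : EN N | t < u x} = {x : EN N | t < |u x|} := by
    ext x; simp [abs_of_nonneg (hu0 x)]
  have h2 : {x : EN N | t < v x} = {x : EN N | t < |v x|} := by
    ext x; simp [abs_of_nonneg (hv0 x)]
  rw [mf, h1, h2]
  exact ENNReal.add_lt_top.mpr ⟨huv t ht, hvv t ht⟩

lemma Rad_nonneg (u v : EN N → ℝ) (t : ℝ) : 0 ≤ Rad u v t :=
  Real.sInf_nonneg fun _ hr => hr.1

lemma Bv_Rad (hN : 1 ≤ N) {u v : EN N → ℝ} {t : ℝ} (hfin : mf u v t ≠ ⊤) :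
    Bv N (Rad u v t) = mf u v t := by
  obtain ⟨r₀, hr₀, hBr₀⟩ := exists_radius hN hfin
  have key : Rad u v t = r₀ := by
    apply le_antisymm
    · exact csInf_le ⟨0, fun r hr => hr.1⟩ ⟨hr₀, hBr₀.ge⟩
    · refine le_csInf ⟨r₀, hr₀, hBr₀.ge⟩ ?_
      rintro r ⟨hr, hm⟩
      by_contra hlt
      push_neg at hlt
      have h2 := Bv_strictLt hN hr hlt
      rw [hBr₀] at h2
      exact absurd hm (not_le.mpr h2)
  rw [key, hBr₀]

lemma Rad_antitone (hN : 1 ≤ N) {u v : EN N → ℝ} {t t' : ℝ} (h : t ≤ t')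
    (hfin : mf u v t ≠ ⊤) : Rad u v t' ≤ Rad u v t := by
  obtain ⟨r₀, hr₀, hBr₀⟩ := exists_radius hN hfin
  refine csInf_le_csInf ⟨0, fun r hr => hr.1⟩ ⟨r₀, hr₀, hBr₀.ge⟩ ?_
  rintro r ⟨h0, hm⟩
  exact ⟨h0, le_trans (mf_antitone u v h) hm⟩

lemma vol_right_cont (w : EN N → ℝ) (s : ℝ) :
    volume {x : EN N | s < w x} = ⨆ n : ℕ, volume {x : EN N | s + 1/((n : ℝ)+1) < w x} := by
  have hmono : Monotone (fun n : ℕ => {x : EN N | s + 1/((n : ℝ)+1) < w x}) := by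
    intro n m h x hx
    simp only [mem_setOf_eq] at hx ⊢
    have h1 : 1/((m : ℝ)+1) ≤ 1/((n : ℝ)+1) := by
      apply one_div_le_one_div_of_le (by positivity)
      exact_mod_cast Nat.succ_le_succ h
    linarith
  rw [← Directed.measure_iUnion hmono.directed_le]
  congr 1
  ext x
  simp only [mem_iUnion, mem_setOf_eq]
  constructor
  · intro hx
    obtain ⟨n, hn⟩ := exists_nat_one_div_lt (sub_pos.mpr hx)
    exact ⟨n, by linarith⟩
  · rintro ⟨n, hn⟩
    have : (0:ℝ) < 1/((n : ℝ)+1) := by positivity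
    linarith

lemma mf_right_cont (u v : EN N → ℝ) (s : ℝ) :
    mf u v s = ⨆ n : ℕ, mf u v (s + 1/((n : ℝ)+1)) := by
  have hmu : Monotone (fun n : ℕ => volume {x : EN N | s + 1/((n : ℝ)+1) < u x}) := by
    intro n m h
    refine measure_mono fun x hx => ?_
    simp only [mem_setOf_eq] at hx ⊢
    have h1 : 1/((m : ℝ)+1) ≤ 1/((n : ℝ)+1) := by
      apply one_div_le_one_div_of_le (by positivity)
      exact_mod_cast Nat.succ_le_succ h
    linarith
  have hmv : Monotone (fun n : ℕ => volume {x : EN N | s + 1/((n : ℝ)+1) < v x}) := by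
    intro n m h
    refine measure_mono fun x hx => ?_
    simp only [mem_setOf_eq] at hx ⊢
    have h1 : 1/((m : ℝ)+1) ≤ 1/((n : ℝ)+1) := by
      apply one_div_le_one_div_of_le (by positivity)
      exact_mod_cast Nat.succ_le_succ h
    linarith
  rw [mf, vol_right_cont u s, vol_right_cont v s,
    ENNReal.iSup_add_iSup fun i j => ⟨max i j,
      add_le_add (hmu (le_max_left i j)) (hmv (le_max_right i j))⟩]
  rfl

lemma mf_small {u v : EN N → ℝ} (hum : Measurable u) (hvm : Measurable v)
    (hu0 : ∀ x, 0 ≤ u x) (hv0 : ∀ x, 0 ≤ v x)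
    (huv : VanishAtInfinity u) (hvv : VanishAtInfinity v)
    {ε : ℝ≥0∞} (hε : 0 < ε) : ∃ t : ℝ, 0 < t ∧ mf u v t < ε := by
  rcases eq_or_ne ε ⊤ with rfl | hεt
  · exact ⟨1, one_pos, mf_lt_top hu0 hv0 huv hvv one_pos⟩
  have key : ∀ (w : EN N → ℝ), Measurable w → (∀ x, 0 ≤ w x) → VanishAtInfinity w →
      (⨅ n : ℕ, volume {x : EN N | (n : ℝ) + 1 < w x}) = 0 := by
    intro w hwm hw0 hwv
    have hanti : Antitone (fun n : ℕ => {x : EN N | (n : ℝ) + 1 < w x}) := by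
      intro n m h x hx
      simp only [mem_setOf_eq] at hx ⊢
      have : (n : ℝ) ≤ (m : ℝ) := by exact_mod_cast h
      linarith
    have hfin : volume {x : EN N | (0 : ℝ) + 1 < w x} ≠ ⊤ := by
      have : {x : EN N | (0:ℝ) + 1 < w x} = {x : EN N | (1:ℝ) < |w x|} := by
        ext x; simp [abs_of_nonneg (hw0 x)]
      rw [this]
      exact (hwv 1 one_pos).ne
    have := Antitone.measure_iInter (μ := volume) hanti
      (fun n => ((hwm measurableSet_Ioi).nullMeasurableSet))
      ⟨0, by simpa using hfin⟩
    have hempty : (⋂ n : ℕ, {x : EN N | (n : ℝ) + 1 < w x}) = ∅ := by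
      ext x
      simp only [mem_iInter, mem_setOf_eq, mem_empty_iff_false, iff_false, not_forall, not_lt]
      obtain ⟨n, hn⟩ := exists_nat_gt (w x)
      exact ⟨n, by linarith⟩
    rw [hempty, measure_empty] at this
    exact this.symm
  have hε2 : 0 < ε / 2 := ENNReal.half_pos hε.ne'
  have hu := key u hum hu0 huv
  have hv := key v hvm hv0 hvv
  obtain ⟨n, hn⟩ := iInf_lt_iff.mp (hu ▸ hε2 : (⨅ n : ℕ, volume {x : EN N | (n : ℝ) + 1 < u x}) < ε / 2)
  obtain ⟨m, hm⟩ := iInf_lt_iff.mp (hv ▸ hε2 : (⨅ n : ℕ, volume {x : EN N | (n : ℝ) + 1 < v x}) < ε / 2)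
  refine ⟨(max n m : ℕ) + 1, by positivity, ?_⟩
  have h1 : volume {x : EN N | ((max n m : ℕ) : ℝ) + 1 < u x}
      ≤ volume {x : EN N | (n : ℝ) + 1 < u x} := by
    refine measure_mono fun x hx => ?_
    simp only [mem_setOf_eq] at hx ⊢
    have : (n : ℝ) ≤ ((max n m : ℕ) : ℝ) := by exact_mod_cast le_max_left n m
    linarith
  have h2 : volume {x : EN N | ((max n m : ℕ) : ℝ) + 1 < v x}
      ≤ volume {x : EN N | (m : ℝ) + 1 < v x} := by
    refine measure_mono fun x hx => ?_
    simp only [mem_setOf_eq] at hx ⊢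
    have : (m : ℝ) ≤ ((max n m : ℕ) : ℝ) := by exact_mod_cast le_max_right n m
    linarith
  calc mf u v ((max n m : ℕ) + 1)
      ≤ volume {x : EN N | (n : ℝ) + 1 < u x} + volume {x : EN N | (m : ℝ) + 1 < v x} :=
        add_le_add h1 h2
    _ < ε / 2 + ε / 2 := ENNReal.add_lt_add hn hm
    _ = ε := ENNReal.add_halves ε

end RearrAux

namespace RearrAux

open Set Metric

variable {N : ℕ}

def Tset (u v : EN N → ℝ) (x : EN N) : Set ℝ := {t : ℝ | 0 < t ∧ ‖x‖ < Rad u v t}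

lemma mem_Astar_iff {u v : EN N → ℝ} {x : EN N} {t : ℝ} :
    x ∈ Astar u v t ↔ ‖x‖ < Rad u v t := by
  rw [Astar_eq, mem_ball, dist_zero_right]

section Main

variable (hN : 1 ≤ N) {u v : EN N → ℝ}
  (hu0 : ∀ x, 0 ≤ u x) (hv0 : ∀ x, 0 ≤ v x)
  (hum : Measurable u) (hvm : Measurable v)
  (huv : VanishAtInfinity u) (hvv : VanishAtInfinity v)

include hN hu0 hv0 hum hvm huv hvv

lemma Tset_bddAbove {x : EN N} (hx : x ≠ 0) : BddAbove (Tset u v x) := by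
  have hb : 0 < Bv N ‖x‖ := measure_ball_pos _ _ (norm_pos_iff.mpr hx)
  obtain ⟨t₀, ht₀, hlt⟩ := mf_small hum hvm hu0 hv0 huv hvv hb
  refine ⟨t₀, fun t ht => ?_⟩
  by_contra h
  push_neg at h
  have h1 : Bv N ‖x‖ ≤ Bv N (Rad u v t) := Bv_mono ht.2.le
  rw [Bv_Rad hN (mf_lt_top hu0 hv0 huv hvv ht.1).ne] at h1
  have h2 : mf u v t ≤ mf u v t₀ := mf_antitone u v h.le
  exact lt_irrefl _ (h1.trans_lt (h2.trans_lt hlt))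

lemma rearr_eq_sSup {x : EN N} (hx : x ≠ 0) : rearr u v x = sSup (Tset u v x) := by
  obtain ⟨τ, hτ⟩ : ∃ τ, sSup (Tset u v x) = τ := ⟨_, rfl⟩
  rw [hτ]
  have hτ0 : 0 ≤ τ := hτ ▸ Real.sSup_nonneg fun t ht => ht.1.le
  have hbdd : BddAbove (Tset u v x) := Tset_bddAbove hN hu0 hv0 hum hvm huv hvv hx
  have hsub : Tset u v x ⊆ Set.Ioc 0 τ := fun t ht => ⟨ht.1, hτ ▸ le_csSup hbdd ht⟩
  have hsup : Set.Ioo 0 τ ⊆ Tset u v x := by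
    rintro t ⟨h1, h2⟩
    have hne : (Tset u v x).Nonempty := by
      rcases (Tset u v x).eq_empty_or_nonempty with h | h
      · exfalso
        rw [h, Real.sSup_empty] at hτ
        rw [← hτ] at h2
        exact absurd (h1.trans h2) (lt_irrefl _)
      · exact h
    obtain ⟨t', ht', htt'⟩ := exists_lt_of_lt_csSup hne (hτ ▸ h2)
    refine ⟨h1, lt_of_lt_of_le ht'.2 ?_⟩
    exact Rad_antitone hN htt'.le (mf_lt_top hu0 hv0 huv hvv h1).ne
  have hTmeas : MeasurableSet (Tset u v x) := by
    rcases em (τ ∈ Tset u v x) with h | h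
    · have heq : Tset u v x = Set.Ioc 0 τ := by
        refine subset_antisymm hsub fun t ht => ?_
        rcases eq_or_lt_of_le ht.2 with rfl | hlt
        · exact h
        · exact hsup ⟨ht.1, hlt⟩
      rw [heq]; exact measurableSet_Ioc
    · have heq : Tset u v x = Set.Ioo 0 τ := by
        refine subset_antisymm (fun t ht => ?_) hsup
        exact ⟨ht.1, lt_of_le_of_ne (hτ ▸ le_csSup hbdd ht) fun he => h (he ▸ ht)⟩
      rw [heq]; exact measurableSet_Ioo
  have hvol : volume (Tset u v x) = ENNReal.ofReal τ := by
    apply le_antisymm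
    · calc volume (Tset u v x) ≤ volume (Set.Ioc 0 τ) := measure_mono hsub
        _ = ENNReal.ofReal τ := by rw [Real.volume_Ioc, sub_zero]
    · calc ENNReal.ofReal τ = volume (Set.Ioo 0 τ) := by rw [Real.volume_Ioo, sub_zero]
        _ ≤ volume (Tset u v x) := measure_mono hsup
  have heq : ∀ t ∈ Set.Ioi (0:ℝ),
      (Astar u v t).indicator (fun _ => (1:ℝ)) x
        = (Tset u v x).indicator (fun _ => (1:ℝ)) t := by
    intro t ht
    by_cases hxt : ‖x‖ < Rad u v t
    · rw [Set.indicator_of_mem (mem_Astar_iff.mpr hxt),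
        Set.indicator_of_mem (show t ∈ Tset u v x from ⟨ht, hxt⟩)]
    · rw [Set.indicator_of_notMem (fun hc => hxt (mem_Astar_iff.mp hc)),
        Set.indicator_of_notMem (fun hc : t ∈ Tset u v x => hxt hc.2)]
  rw [rearr, setIntegral_congr_fun measurableSet_Ioi heq]
  calc (∫ t in Set.Ioi (0:ℝ), (Tset u v x).indicator (fun _ => (1:ℝ)) t)
      = ((volume.restrict (Set.Ioi 0)) (Tset u v x)).toReal • (1:ℝ) :=
        integral_indicator_const (1:ℝ) hTmeas
    _ = τ := by
        rw [Measure.restrict_apply hTmeas,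
          inter_eq_self_of_subset_left (show Tset u v x ⊆ Set.Ioi 0 from fun t ht => ht.1),
          hvol, smul_eq_mul, mul_one, ENNReal.toReal_ofReal hτ0]

end Main

end RearrAux

namespace RearrAux

open Set Metric

variable {N : ℕ}

def rho (u v : EN N → ℝ) (s : ℝ) : ℝ := ⨆ n : ℕ, Rad u v (s + 1/((n : ℝ)+1))

lemma rearr_nonneg (u v : EN N → ℝ) (x : EN N) : 0 ≤ rearr u v x :=
  integral_nonneg fun t => Set.indicator_nonneg (fun _ _ => zero_le_one) x

section Main2

variable (hN : 1 ≤ N) {u v : EN N → ℝ}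
  (hu0 : ∀ x, 0 ≤ u x) (hv0 : ∀ x, 0 ≤ v x)
  (hum : Measurable u) (hvm : Measurable v)
  (huv : VanishAtInfinity u) (hvv : VanishAtInfinity v)

include hN hu0 hv0 hum hvm huv hvv

lemma rho_bdd {s : ℝ} (hs : 0 < s) :
    BddAbove (Set.range fun n : ℕ => Rad u v (s + 1/((n : ℝ)+1))) := by
  refine ⟨Rad u v s, ?_⟩
  rintro r ⟨n, rfl⟩
  exact Rad_antitone hN (le_add_of_nonneg_right (by positivity))
    (mf_lt_top hu0 hv0 huv hvv hs).ne

lemma volume_zero_singleton : volume ({0} : Set (EN N)) = 0 := by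
  haveI := nontrivialEN hN
  have h1 : ({0} : Set (EN N)) = Metric.closedBall 0 0 := (Metric.closedBall_zero).symm
  rw [h1, Measure.addHaar_closedBall _ _ le_rfl, finrank_euclideanSpace_fin,
    zero_pow (by omega : N ≠ 0), ENNReal.ofReal_zero, zero_mul]

lemma lt_rearr_iff {s : ℝ} (hs : 0 < s) {x : EN N} (hx : x ≠ 0) :
    s < rearr u v x ↔ ‖x‖ < rho u v s := by
  have hbdd : BddAbove (Tset u v x) := Tset_bddAbove hN hu0 hv0 hum hvm huv hvv hx
  have hrbdd := rho_bdd hN hu0 hv0 hum hvm huv hvv hs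
  rw [rearr_eq_sSup hN hu0 hv0 hum hvm huv hvv hx]
  constructor
  · intro h
    have hne : (Tset u v x).Nonempty := by
      rcases (Tset u v x).eq_empty_or_nonempty with he | he
      · rw [he, Real.sSup_empty] at h
        exact absurd (hs.trans h) (lt_irrefl _)
      · exact he
    obtain ⟨t, ht, hst⟩ := exists_lt_of_lt_csSup hne h
    obtain ⟨n, hn⟩ := exists_nat_one_div_lt (sub_pos.mpr hst)
    have hle : s + 1/((n : ℝ)+1) ≤ t := by linarith
    have hlt : ‖x‖ < Rad u v (s + 1/((n : ℝ)+1)) :=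
      lt_of_lt_of_le ht.2 (Rad_antitone hN hle
        (mf_lt_top hu0 hv0 huv hvv (by positivity)).ne)
    exact lt_of_lt_of_le hlt (le_ciSup hrbdd n)
  · intro h
    obtain ⟨n, hn⟩ := (lt_ciSup_iff hrbdd).mp h
    have htT : (s + 1/((n : ℝ)+1)) ∈ Tset u v x := ⟨by positivity, hn⟩
    have h1 : s < s + 1/((n : ℝ)+1) := lt_add_of_pos_right _ (by positivity)
    exact lt_of_lt_of_le h1 (le_csSup hbdd htT)

lemma level_ae {s : ℝ} (hs : 0 < s) :
    {x : EN N | s < rearr u v x} =ᵐ[volume] Metric.ball (0 : EN N) (rho u v s) := by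
  have hae : ∀ᵐ x : EN N ∂volume, x ≠ 0 := by
    rw [ae_iff]
    simp only [ne_eq, not_not, setOf_eq_eq_singleton]
    exact volume_zero_singleton hN hu0 hv0 hum hvm huv hvv
  rw [eventuallyEq_set]
  filter_upwards [hae] with x hx
  rw [mem_ball, dist_zero_right]
  exact lt_rearr_iff hN hu0 hv0 hum hvm huv hvv hs hx

lemma vol_ball_rho {s : ℝ} (hs : 0 < s) :
    volume (Metric.ball (0 : EN N) (rho u v s)) = mf u v s := by
  have hrbdd := rho_bdd hN hu0 hv0 hum hvm huv hvv hs
  have hmono : Monotone (fun n : ℕ => Metric.ball (0 : EN N) (Rad u v (s + 1/((n : ℝ)+1)))) := by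
    intro n m h
    apply Metric.ball_subset_ball
    have h1 : s + 1/((m : ℝ)+1) ≤ s + 1/((n : ℝ)+1) := by
      have : 1/((m : ℝ)+1) ≤ 1/((n : ℝ)+1) := by
        apply one_div_le_one_div_of_le (by positivity)
        exact_mod_cast Nat.succ_le_succ h
      linarith
    exact Rad_antitone hN h1 (mf_lt_top hu0 hv0 huv hvv (by positivity)).ne
  have hball : Metric.ball (0 : EN N) (rho u v s)
      = ⋃ n : ℕ, Metric.ball (0 : EN N) (Rad u v (s + 1/((n : ℝ)+1))) := by
    ext x
    simp only [mem_ball, dist_zero_right, mem_iUnion]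
    exact lt_ciSup_iff hrbdd
  rw [hball, Directed.measure_iUnion hmono.directed_le]
  have hBv : ∀ n : ℕ, volume (Metric.ball (0 : EN N) (Rad u v (s + 1/((n : ℝ)+1))))
      = mf u v (s + 1/((n : ℝ)+1)) := fun n =>
    Bv_Rad hN (mf_lt_top hu0 hv0 huv hvv (by positivity)).ne
  rw [iSup_congr hBv, ← mf_right_cont]

lemma vol_level {s : ℝ} (hs : 0 < s) :
    volume {x : EN N | s < rearr u v x} = mf u v s :=
  (measure_congr (level_ae hN hu0 hv0 hum hvm huv hvv hs)).trans
    (vol_ball_rho hN hu0 hv0 hum hvm huv hvv hs)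

lemma level_nullMeasurable {s : ℝ} (hs : 0 < s) :
    NullMeasurableSet {x : EN N | s < rearr u v x} volume :=
  measurableSet_ball.nullMeasurableSet.congr
    (level_ae hN hu0 hv0 hum hvm huv hvv hs).symm

lemma rearr_aemeasurable : AEMeasurable (rearr u v) volume := by
  refine NullMeasurable.aemeasurable ?_
  have key : ∀ s : ℝ, NullMeasurableSet {x : EN N | s < rearr u v x} volume := by
    intro s
    rcases lt_trichotomy s 0 with h | rfl | h
    · have huniv : {x : EN N | s < rearr u v x} = univ :=
        eq_univ_of_forall fun x => h.trans_le (rearr_nonneg u v x)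
      rw [huniv]; exact MeasurableSet.univ.nullMeasurableSet
    · have hunion : {x : EN N | (0:ℝ) < rearr u v x}
          = ⋃ n : ℕ, {x : EN N | 1/((n : ℝ)+1) < rearr u v x} := by
        ext x
        simp only [mem_setOf_eq, mem_iUnion]
        constructor
        · intro hx
          obtain ⟨n, hn⟩ := exists_nat_one_div_lt hx
          exact ⟨n, hn⟩
        · rintro ⟨n, hn⟩
          exact lt_trans (by positivity) hn
      rw [hunion]
      exact NullMeasurableSet.iUnion fun n =>
        level_nullMeasurable hN hu0 hv0 hum hvm huv hvv (by positivity)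
    · exact level_nullMeasurable hN hu0 hv0 hum hvm huv hvv h
  exact measurable_of_Ioi (α := ℝ) (δ := NullMeasurableSpace (EN N) volume)
    (f := rearr u v) fun s => key s

end Main2

end RearrAux

/-- Lemma 2.1 (iii): `‖{u,v}⋆‖_p^p = ‖u‖_p^p + ‖v‖_p^p` for every `1 ≤ p < ∞`
(as an identity in `[0,∞]`, both sides may be infinite). -/
theorem rearr_Lp_additive
    (N : ℕ) (hN : 1 ≤ N) (u v : EN N → ℝ)
    (hu0 : ∀ x, 0 ≤ u x) (hv0 : ∀ x, 0 ≤ v x)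
    (hum : Measurable u) (hvm : Measurable v)
    (huv : VanishAtInfinity u) (hvv : VanishAtInfinity v) :
    ∀ p : ℝ, 1 ≤ p →
      (∫⁻ x, ENNReal.ofReal (|rearr u v x| ^ p)) =
        (∫⁻ x, ENNReal.ofReal (|u x| ^ p)) + ∫⁻ x, ENNReal.ofReal (|v x| ^ p) := by
  intro p hp
  have hp0 : 0 < p := lt_of_lt_of_le one_pos hp
  have e1 : (∫⁻ x, ENNReal.ofReal (|rearr u v x| ^ p))
      = ∫⁻ x, ENNReal.ofReal (rearr u v x ^ p) :=
    lintegral_congr fun x => by rw [abs_of_nonneg (RearrAux.rearr_nonneg u v x)]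
  have e2 : (∫⁻ x, ENNReal.ofReal (|u x| ^ p)) = ∫⁻ x, ENNReal.ofReal (u x ^ p) :=
    lintegral_congr fun x => by rw [abs_of_nonneg (hu0 x)]
  have e3 : (∫⁻ x, ENNReal.ofReal (|v x| ^ p)) = ∫⁻ x, ENNReal.ofReal (v x ^ p) :=
    lintegral_congr fun x => by rw [abs_of_nonneg (hv0 x)]
  rw [e1, e2, e3,
    MeasureTheory.lintegral_rpow_eq_lintegral_meas_lt_mul volume
      (ae_of_all _ (RearrAux.rearr_nonneg u v))
      (RearrAux.rearr_aemeasurable hN hu0 hv0 hum hvm huv hvv) hp0,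
    MeasureTheory.lintegral_rpow_eq_lintegral_meas_lt_mul volume
      (ae_of_all _ hu0) hum.aemeasurable hp0,
    MeasureTheory.lintegral_rpow_eq_lintegral_meas_lt_mul volume
      (ae_of_all _ hv0) hvm.aemeasurable hp0,
    ← mul_add]
  congr 1
  have hsplit : ∀ t ∈ Set.Ioi (0:ℝ),
      volume {a : EN N | t < rearr u v a} * ENNReal.ofReal (t ^ (p-1))
        = volume {a : EN N | t < u a} * ENNReal.ofReal (t ^ (p-1))
          + volume {a : EN N | t < v a} * ENNReal.ofReal (t ^ (p-1)) := by
    intro t ht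
    rw [RearrAux.vol_level hN hu0 hv0 hum hvm huv hvv ht, RearrAux.mf, add_mul]
  rw [setLIntegral_congr_fun measurableSet_Ioi hsplit]
  have hA : Measurable fun t : ℝ => volume {a : EN N | t < u a} := by
    apply Antitone.measurable
    intro t t' h
    exact measure_mono fun a ha => lt_of_le_of_lt h ha
  have hc : Measurable fun t : ℝ => ENNReal.ofReal (t ^ (p-1)) :=
    (Real.continuous_rpow_const (by linarith)).measurable.ennreal_ofReal
  exact lintegral_add_left (hA.mul hc) _
end
end

section
/- Let u1, u2, v1, v2 be nonnegative Borel measurable functions on ℝ^N vanishing at infinity. Then ∫_{ℝ^N} (u1·u2 + v1·v2) dx ≤ ∫_{ℝ^N} {u1,v1}⋆ · {u2,v2}⋆ dx. -/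
noncomputable section

open MeasureTheory Filter Topology
open scoped ENNReal NNReal

namespace RearrProof

open Set Metric

variable {N : ℕ}

/-- The total distribution function. -/
def mf (u v : EN N → ℝ) (t : ℝ) : ℝ≥0∞ :=
  volume {x : EN N | t < u x} + volume {x : EN N | t < v x}

lemma mf_anti (u v : EN N → ℝ) : Antitone (mf u v) := fun s t hst =>
  add_le_add (measure_mono fun x hx => lt_of_le_of_lt hst hx)
    (measure_mono fun x hx => lt_of_le_of_lt hst hx)

lemma mf_lt_top {u v : EN N → ℝ} (hu0 : ∀ x, 0 ≤ u x) (hv0 : ∀ x, 0 ≤ v x)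
    (huV : VanishAtInfinity u) (hvV : VanishAtInfinity v) {t : ℝ} (ht : 0 < t) :
    mf u v t < ⊤ := by
  have h1 : {x : EN N | t < u x} = {x : EN N | t < |u x|} := by
    ext x; simp [abs_of_nonneg (hu0 x)]
  have h2 : {x : EN N | t < v x} = {x : EN N | t < |v x|} := by
    ext x; simp [abs_of_nonneg (hv0 x)]
  rw [mf, h1, h2]
  exact ENNReal.add_lt_top.mpr ⟨huV t ht, hvV t ht⟩

lemma mf_measurable (u v : EN N → ℝ) : Measurable (mf u v) :=
  Antitone.measurable (mf_anti u v)

lemma c_pos : 0 < volume (Metric.ball (0 : EN N) 1) :=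
  measure_ball_pos _ _ one_pos

lemma c_lt_top : volume (Metric.ball (0 : EN N) 1) < ⊤ := measure_ball_lt_top

lemma nontrivialEN (hN : 1 ≤ N) : Nontrivial (EN N) := by
  have h : 0 < Module.finrank ℝ (EN N) := by
    rw [finrank_euclideanSpace_fin]; omega
  exact Module.nontrivial_of_finrank_pos (R := ℝ) h

lemma vol_ball (hN : 1 ≤ N) {r : ℝ} (hr : 0 ≤ r) :
    volume (Metric.ball (0 : EN N) r)
      = ENNReal.ofReal (r ^ N) * volume (Metric.ball (0 : EN N) 1) := by
  haveI := nontrivialEN hN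
  rw [Measure.addHaar_ball volume (0 : EN N) hr, finrank_euclideanSpace_fin]

/-- The radius of `A⋆(u,v;t)`. -/
def rad (u v : EN N → ℝ) (t : ℝ) : ℝ :=
  ((mf u v t) / volume (Metric.ball (0 : EN N) 1)).toReal ^ ((N : ℝ)⁻¹)

lemma rad_nonneg {u v : EN N → ℝ} {t : ℝ} : 0 ≤ rad u v t :=
  Real.rpow_nonneg ENNReal.toReal_nonneg _

lemma rad_measurable (u v : EN N → ℝ) : Measurable (rad u v) :=
  (Real.continuous_rpow_const (by positivity)).measurable.comp
    ((mf_measurable u v).div_const _).ennreal_toReal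

lemma rad_pow (hN : 1 ≤ N) (u v : EN N → ℝ) (t : ℝ) :
    (rad u v t) ^ N = ((mf u v t) / volume (Metric.ball (0 : EN N) 1)).toReal :=
  Real.rpow_inv_natCast_pow ENNReal.toReal_nonneg (by omega)

lemma vol_ball_rad (hN : 1 ≤ N) {u v : EN N → ℝ} {t : ℝ} (hfin : mf u v t ≠ ⊤) :
    volume (Metric.ball (0 : EN N) (rad u v t)) = mf u v t := by
  rw [vol_ball hN rad_nonneg, rad_pow hN,
    ENNReal.ofReal_toReal (ENNReal.div_lt_top hfin c_pos.ne').ne,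
    ENNReal.div_mul_cancel c_pos.ne' c_lt_top.ne]

lemma rad_le_of (hN : 1 ≤ N) {u v : EN N → ℝ} {t r : ℝ} (hfin : mf u v t ≠ ⊤)
    (hr : 0 ≤ r) (h : mf u v t ≤ volume (Metric.ball (0 : EN N) r)) :
    rad u v t ≤ r := by
  have h2 : volume (Metric.ball (0 : EN N) (rad u v t))
      ≤ volume (Metric.ball (0 : EN N) r) := by
    rw [vol_ball_rad hN hfin]; exact h
  rw [vol_ball hN rad_nonneg, vol_ball hN hr] at h2
  have h3 : ENNReal.ofReal ((rad u v t) ^ N) ≤ ENNReal.ofReal (r ^ N) :=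
    (ENNReal.mul_le_mul_iff_left c_pos.ne' c_lt_top.ne).mp h2
  have h4 : (rad u v t) ^ N ≤ r ^ N := by
    rwa [ENNReal.ofReal_le_ofReal_iff (pow_nonneg hr _)] at h3
  exact (pow_le_pow_iff_left₀ rad_nonneg hr (by omega)).mp h4

lemma Astar_eq (hN : 1 ≤ N) {u v : EN N → ℝ} {t : ℝ} (hfin : mf u v t ≠ ⊤) :
    Astar u v t = Metric.ball (0 : EN N) (rad u v t) := by
  have hset : {r : ℝ | 0 ≤ r ∧
      volume {x : EN N | t < u x} + volume {x : EN N | t < v x}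
        ≤ volume (Metric.ball (0 : EN N) r)} = Set.Ici (rad u v t) := by
    ext r
    constructor
    · rintro ⟨hr0, hr⟩
      exact rad_le_of hN hfin hr0 hr
    · intro hr
      have hr0 : 0 ≤ r := le_trans rad_nonneg hr
      refine ⟨hr0, ?_⟩
      calc mf u v t = volume (Metric.ball (0 : EN N) (rad u v t)) :=
            (vol_ball_rad hN hfin).symm
        _ ≤ volume (Metric.ball (0 : EN N) r) := measure_mono (ball_subset_ball hr)
  rw [Astar, hset, csInf_Ici]

lemma rad_anti (hN : 1 ≤ N) {u v : EN N → ℝ} {s t : ℝ}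
    (hfin : mf u v s ≠ ⊤) (hst : s ≤ t) : rad u v t ≤ rad u v s := by
  apply Real.rpow_le_rpow ENNReal.toReal_nonneg _ (by positivity)
  apply ENNReal.toReal_mono (ENNReal.div_lt_top hfin c_pos.ne').ne
  exact ENNReal.div_le_div_right (mf_anti u v hst) _

lemma exists_mf_le {u v : EN N → ℝ} (hum : Measurable u) (hvm : Measurable v)
    (hu0 : ∀ x, 0 ≤ u x) (hv0 : ∀ x, 0 ≤ v x)
    (huV : VanishAtInfinity u) (hvV : VanishAtInfinity v)
    {ε : ℝ≥0∞} (hε : 0 < ε) : ∃ T : ℝ, 0 < T ∧ mf u v T ≤ ε := by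
  have key : ∀ (w : EN N → ℝ), Measurable w → (∀ x, 0 ≤ w x) → VanishAtInfinity w →
      Tendsto (fun n : ℕ => volume {x : EN N | (n : ℝ) + 1 < w x}) atTop (𝓝 0) := by
    intro w hwm hw0 hwV
    have hmeas : ∀ n : ℕ, NullMeasurableSet {x : EN N | (n : ℝ) + 1 < w x} volume :=
      fun n => (measurableSet_lt measurable_const hwm).nullMeasurableSet
    have hanti : Antitone fun n : ℕ => {x : EN N | (n : ℝ) + 1 < w x} := by
      intro a b hab x hx
      have hcast : (a : ℝ) ≤ b := Nat.cast_le.mpr hab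
      have hx' : (b : ℝ) + 1 < w x := hx
      show (a : ℝ) + 1 < w x
      linarith
    have hfin : ∃ n : ℕ, volume {x : EN N | (n : ℝ) + 1 < w x} ≠ ∞ := by
      refine ⟨0, ?_⟩
      have heq : {x : EN N | ((0:ℕ) : ℝ) + 1 < w x} = {x : EN N | (1:ℝ) < |w x|} := by
        ext x; simp [abs_of_nonneg (hw0 x)]
      rw [heq]
      exact (hwV 1 one_pos).ne
    have hInter : ⋂ n : ℕ, {x : EN N | (n : ℝ) + 1 < w x} = ∅ := by
      ext x
      simp only [Set.mem_iInter, Set.mem_setOf_eq, Set.mem_empty_iff_false, iff_false, not_forall]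
      obtain ⟨n, hn⟩ := exists_nat_ge (w x)
      exact ⟨n, by linarith⟩
    have := tendsto_measure_iInter_atTop hmeas hanti hfin
    rwa [hInter, measure_empty] at this
  have hε2 : 0 < ε / 2 := ENNReal.half_pos hε.ne'
  have h1 := (key u hum hu0 huV).eventually_lt_const hε2
  have h2 := (key v hvm hv0 hvV).eventually_lt_const hε2
  obtain ⟨n, hn1, hn2⟩ := (h1.and h2).exists
  refine ⟨(n : ℝ) + 1, by positivity, ?_⟩
  calc mf u v ((n : ℝ) + 1) ≤ ε / 2 + ε / 2 := add_le_add hn1.le hn2.le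
    _ = ε := ENNReal.add_halves ε

lemma rearr_nonneg {u v : EN N → ℝ} {x : EN N} : 0 ≤ rearr u v x :=
  integral_nonneg fun t => Set.indicator_nonneg (fun _ _ => zero_le_one) _

/-- Key representation of `rearr` for `x ≠ 0`. -/
lemma rearr_repr (hN : 1 ≤ N) {u v : EN N → ℝ} (hum : Measurable u) (hvm : Measurable v)
    (hu0 : ∀ x, 0 ≤ u x) (hv0 : ∀ x, 0 ≤ v x)
    (huV : VanishAtInfinity u) (hvV : VanishAtInfinity v)
    {x : EN N} (hx : x ≠ 0) :
    ENNReal.ofReal (rearr u v x)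
      = ∫⁻ t in Set.Ioi (0 : ℝ),
          (Metric.ball (0 : EN N) (rad u v t)).indicator (fun _ => (1 : ℝ≥0∞)) x := by
  set S : Set ℝ := {t : ℝ | 0 < t ∧ x ∈ Metric.ball (0 : EN N) (rad u v t)} with hSdef
  have hfin : ∀ {t : ℝ}, 0 < t → mf u v t ≠ ⊤ :=
    fun ht => (mf_lt_top hu0 hv0 huV hvV ht).ne
  have hSmeas : MeasurableSet S := by
    apply Set.OrdConnected.measurableSet
    constructor
    intro a ha b hb t ht
    have hat : 0 < t := lt_of_lt_of_le ha.1 ht.1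
    refine ⟨hat, ?_⟩
    have hsub : Metric.ball (0 : EN N) (rad u v b) ⊆ Metric.ball (0 : EN N) (rad u v t) :=
      ball_subset_ball (rad_anti hN (hfin hat) ht.2)
    exact hsub hb.2
  have hSsub : ∃ T : ℝ, 0 < T ∧ S ⊆ Set.Ioc 0 T := by
    have hball : (0 : ℝ≥0∞) < volume (Metric.ball (0 : EN N) ‖x‖) :=
      measure_ball_pos _ _ (norm_pos_iff.mpr hx)
    obtain ⟨T, hT0, hTle⟩ := exists_mf_le hum hvm hu0 hv0 huV hvV hball
    refine ⟨T, hT0, fun t ht => ⟨ht.1, ?_⟩⟩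
    by_contra hcon
    push_neg at hcon
    have hmfle : mf u v t ≤ volume (Metric.ball (0 : EN N) ‖x‖) :=
      le_trans (mf_anti u v hcon.le) hTle
    have : rad u v t ≤ ‖x‖ := rad_le_of hN (hfin ht.1) (norm_nonneg x) hmfle
    exact absurd (mem_ball_zero_iff.mp ht.2) (not_lt.mpr this)
  obtain ⟨T, hT0, hST⟩ := hSsub
  have hSfin : volume S ≠ ⊤ := by
    refine (lt_of_le_of_lt (measure_mono hST) ?_).ne
    rw [Real.volume_Ioc]
    exact ENNReal.ofReal_lt_top
  have hSsub' : S ⊆ Set.Ioi (0 : ℝ) := fun t ht => ht.1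
  -- the real integral
  have hre : rearr u v x = (volume S).toReal := by
    rw [rearr]
    have hcongr : ∀ t ∈ Set.Ioi (0 : ℝ),
        (Astar u v t).indicator (fun _ => (1 : ℝ)) x
          = S.indicator (fun _ => (1 : ℝ)) t := by
      intro t ht
      rw [Astar_eq hN (hfin ht)]
      by_cases hxt : x ∈ Metric.ball (0 : EN N) (rad u v t)
      · rw [Set.indicator_of_mem hxt,
          Set.indicator_of_mem (show t ∈ S from ⟨ht, hxt⟩)]
      · rw [Set.indicator_of_notMem hxt,
          Set.indicator_of_notMem (show t ∉ S from fun hc => hxt hc.2)]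
    rw [setIntegral_congr_fun measurableSet_Ioi hcongr, integral_indicator hSmeas,
      setIntegral_const, measureReal_def, Measure.restrict_apply hSmeas,
      Set.inter_eq_left.mpr hSsub', smul_eq_mul, mul_one]
  -- the lintegral
  have hli : ∫⁻ t in Set.Ioi (0 : ℝ),
      (Metric.ball (0 : EN N) (rad u v t)).indicator (fun _ => (1 : ℝ≥0∞)) x
        = volume S := by
    have hcongr : ∀ t ∈ Set.Ioi (0 : ℝ),
        (Metric.ball (0 : EN N) (rad u v t)).indicator (fun _ => (1 : ℝ≥0∞)) x
          = S.indicator (fun _ => (1 : ℝ≥0∞)) t := by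
      intro t ht
      by_cases hxt : x ∈ Metric.ball (0 : EN N) (rad u v t)
      · rw [Set.indicator_of_mem hxt,
          Set.indicator_of_mem (show t ∈ S from ⟨ht, hxt⟩)]
      · rw [Set.indicator_of_notMem hxt,
          Set.indicator_of_notMem (show t ∉ S from fun hc => hxt hc.2)]
    rw [setLIntegral_congr_fun_ae measurableSet_Ioi (Filter.Eventually.of_forall hcongr),
      lintegral_indicator hSmeas, setLIntegral_one, Measure.restrict_apply hSmeas,
      Set.inter_eq_left.mpr hSsub']
  rw [hre, hli, ENNReal.ofReal_toReal hSfin]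

/-- Layer cake for a product of two functions. -/
lemma lhs_layercake {f g : EN N → ℝ} (hf0 : ∀ x, 0 ≤ f x) (hg0 : ∀ x, 0 ≤ g x)
    (hfm : Measurable f) (hgm : Measurable g) :
    ∫⁻ x, ENNReal.ofReal (f x * g x)
      = ∫⁻ t in Set.Ioi (0 : ℝ), ∫⁻ s in Set.Ioi (0 : ℝ),
          volume ({x : EN N | s < g x} ∩ {x : EN N | t < f x}) := by
  calc ∫⁻ x, ENNReal.ofReal (f x * g x)
      = ∫⁻ x, ENNReal.ofReal (g x) * ENNReal.ofReal (f x) := by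
        refine lintegral_congr fun x => ?_
        rw [mul_comm (f x) (g x), ENNReal.ofReal_mul (hg0 x)]
    _ = ∫⁻ x, ENNReal.ofReal (f x)
          ∂(volume.withDensity fun x => ENNReal.ofReal (g x)) := by
        rw [lintegral_withDensity_eq_lintegral_mul volume hgm.ennreal_ofReal
          hfm.ennreal_ofReal]
        rfl
    _ = ∫⁻ t in Set.Ioi (0 : ℝ),
          (volume.withDensity fun x => ENNReal.ofReal (g x)) {x : EN N | t < f x} :=
        lintegral_eq_lintegral_meas_lt _ (Filter.Eventually.of_forall hf0)
          hfm.aemeasurable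
    _ = ∫⁻ t in Set.Ioi (0 : ℝ), ∫⁻ s in Set.Ioi (0 : ℝ),
          volume ({x : EN N | s < g x} ∩ {x : EN N | t < f x}) := by
        refine lintegral_congr fun t => ?_
        rw [withDensity_apply _ (measurableSet_lt measurable_const hfm)]
        have := lintegral_eq_lintegral_meas_lt
          (volume.restrict {x : EN N | t < f x})
          (Filter.Eventually.of_forall hg0) hgm.aemeasurable
        rw [this]
        refine lintegral_congr fun s => ?_
        rw [Measure.restrict_apply (measurableSet_lt measurable_const hgm)]

/-- Measurability of the double distribution function. -/
lemma meas_G {f g : EN N → ℝ} (hfm : Measurable f) (hgm : Measurable g) :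
    Measurable (fun q : ℝ × ℝ =>
      volume ({x : EN N | q.2 < g x} ∩ {x : EN N | q.1 < f x})) := by
  have hset : MeasurableSet {p : (ℝ × ℝ) × EN N | p.1.2 < g p.2 ∧ p.1.1 < f p.2} :=
    (measurableSet_lt (measurable_fst.snd) (hgm.comp measurable_snd)).inter
      (measurableSet_lt (measurable_fst.fst) (hfm.comp measurable_snd))
  have hrepr : (fun q : ℝ × ℝ =>
      volume ({x : EN N | q.2 < g x} ∩ {x : EN N | q.1 < f x}))
      = fun q : ℝ × ℝ => ∫⁻ x : EN N,
          ({p : (ℝ × ℝ) × EN N | p.1.2 < g p.2 ∧ p.1.1 < f p.2}).indicator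
            (fun _ => (1 : ℝ≥0∞)) (q, x) := by
    funext q
    have hsec : MeasurableSet {x : EN N | q.2 < g x ∧ q.1 < f x} :=
      (measurableSet_lt measurable_const hgm).inter
        (measurableSet_lt measurable_const hfm)
    have : ∀ x : EN N,
        ({p : (ℝ × ℝ) × EN N | p.1.2 < g p.2 ∧ p.1.1 < f p.2}).indicator
          (fun _ => (1 : ℝ≥0∞)) (q, x)
        = ({x : EN N | q.2 < g x ∧ q.1 < f x}).indicator (fun _ => (1 : ℝ≥0∞)) x := by
      intro x
      by_cases hmem : q.2 < g x ∧ q.1 < f x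
      · rw [Set.indicator_of_mem
            (show (q, x) ∈ {p : (ℝ × ℝ) × EN N | p.1.2 < g p.2 ∧ p.1.1 < f p.2} from hmem),
          Set.indicator_of_mem
            (show x ∈ {x : EN N | q.2 < g x ∧ q.1 < f x} from hmem)]
      · rw [Set.indicator_of_notMem
            (show (q, x) ∉ {p : (ℝ × ℝ) × EN N | p.1.2 < g p.2 ∧ p.1.1 < f p.2} from hmem),
          Set.indicator_of_notMem
            (show x ∉ {x : EN N | q.2 < g x ∧ q.1 < f x} from hmem)]
    rw [lintegral_congr this, lintegral_indicator hsec, setLIntegral_one]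
    rfl
  rw [hrepr]
  exact Measurable.lintegral_prod_right
    (f := fun (q : ℝ × ℝ) (x : EN N) =>
      ({p : (ℝ × ℝ) × EN N | p.1.2 < g p.2 ∧ p.1.1 < f p.2}).indicator
        (fun _ => (1 : ℝ≥0∞)) (q, x))
    (measurable_const.indicator hset)

lemma meas_G_outer {f g : EN N → ℝ} (hfm : Measurable f) (hgm : Measurable g) :
    Measurable (fun t : ℝ => ∫⁻ s in Set.Ioi (0 : ℝ),
      volume ({x : EN N | s < g x} ∩ {x : EN N | t < f x})) :=
  Measurable.lintegral_prod_right
    (f := fun t s => volume ({x : EN N | s < g x} ∩ {x : EN N | t < f x}))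
    (meas_G hfm hgm)

end RearrProof

open RearrProof Set Metric in
/-- Lemma 2.1 (v). -/
theorem rearr_product_inequality
    (N : ℕ) (hN : 1 ≤ N) (u1 u2 v1 v2 : EN N → ℝ)
    (hu10 : ∀ x, 0 ≤ u1 x) (hu20 : ∀ x, 0 ≤ u2 x)
    (hv10 : ∀ x, 0 ≤ v1 x) (hv20 : ∀ x, 0 ≤ v2 x)
    (hu1m : Measurable u1) (hu2m : Measurable u2)
    (hv1m : Measurable v1) (hv2m : Measurable v2)
    (hu1v : VanishAtInfinity u1) (hu2v : VanishAtInfinity u2)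
    (hv1v : VanishAtInfinity v1) (hv2v : VanishAtInfinity v2) :
    (∫⁻ x, ENNReal.ofReal (u1 x * u2 x + v1 x * v2 x)) ≤
      ∫⁻ x, ENNReal.ofReal (rearr u1 v1 x * rearr u2 v2 x) := by
  classical
  -- abbreviations
  set E1 : Set (ℝ × EN N) := {p : ℝ × EN N | ‖p.2‖ < rad u1 v1 p.1} with hE1def
  set E2 : Set (ℝ × EN N) := {p : ℝ × EN N | ‖p.2‖ < rad u2 v2 p.1} with hE2def
  have hE1 : MeasurableSet E1 :=
    measurableSet_lt (measurable_snd.norm) ((rad_measurable u1 v1).comp measurable_fst)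
  have hE2 : MeasurableSet E2 :=
    measurableSet_lt (measurable_snd.norm) ((rad_measurable u2 v2).comp measurable_fst)
  have hk1 : ∀ (t : ℝ) (x : EN N),
      (Metric.ball (0 : EN N) (rad u1 v1 t)).indicator (fun _ => (1 : ℝ≥0∞)) x
        = E1.indicator (fun _ => (1 : ℝ≥0∞)) (t, x) := by
    intro t x
    by_cases h : ‖x‖ < rad u1 v1 t
    · rw [Set.indicator_of_mem (mem_ball_zero_iff.mpr h),
        Set.indicator_of_mem (show (t, x) ∈ E1 from h)]
    · rw [Set.indicator_of_notMem (fun hc => h (mem_ball_zero_iff.mp hc)),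
        Set.indicator_of_notMem (show (t, x) ∉ E1 from h)]
  have hk2 : ∀ (t : ℝ) (x : EN N),
      (Metric.ball (0 : EN N) (rad u2 v2 t)).indicator (fun _ => (1 : ℝ≥0∞)) x
        = E2.indicator (fun _ => (1 : ℝ≥0∞)) (t, x) := by
    intro t x
    by_cases h : ‖x‖ < rad u2 v2 t
    · rw [Set.indicator_of_mem (mem_ball_zero_iff.mpr h),
        Set.indicator_of_mem (show (t, x) ∈ E2 from h)]
    · rw [Set.indicator_of_notMem (fun hc => h (mem_ball_zero_iff.mp hc)),
        Set.indicator_of_notMem (show (t, x) ∉ E2 from h)]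
  -- RHS equals double integral of volumes of intersections of balls
  have hRHS : ∫⁻ x, ENNReal.ofReal (rearr u1 v1 x * rearr u2 v2 x)
      = ∫⁻ t in Set.Ioi (0 : ℝ), ∫⁻ s in Set.Ioi (0 : ℝ),
          volume (Metric.ball (0 : EN N) (rad u1 v1 t)
            ∩ Metric.ball (0 : EN N) (rad u2 v2 s)) := by
    haveI : Nontrivial (EN N) := nontrivialEN hN
    have hx0 : ∀ᵐ x : EN N, x ≠ 0 := by
      rw [ae_iff]
      have : {x : EN N | ¬x ≠ 0} = {(0 : EN N)} := by ext y; simp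
      rw [this]
      exact measure_singleton 0
    have h0 : ∀ᵐ x : EN N, ENNReal.ofReal (rearr u1 v1 x * rearr u2 v2 x)
        = (∫⁻ t in Set.Ioi (0 : ℝ), E1.indicator (fun _ => (1 : ℝ≥0∞)) (t, x))
          * (∫⁻ s in Set.Ioi (0 : ℝ), E2.indicator (fun _ => (1 : ℝ≥0∞)) (s, x)) := by
      filter_upwards [hx0] with x hx
      rw [ENNReal.ofReal_mul rearr_nonneg,
        rearr_repr hN hu1m hv1m hu10 hv10 hu1v hv1v hx,
        rearr_repr hN hu2m hv2m hu20 hv20 hu2v hv2v hx]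
      congr 1
      · exact lintegral_congr fun t => hk1 t x
      · exact lintegral_congr fun s => hk2 s x
    rw [lintegral_congr_ae h0]
    have hmeas1sec : ∀ x : EN N, Measurable fun t : ℝ =>
        E1.indicator (fun _ => (1 : ℝ≥0∞)) (t, x) :=
      fun x => (measurable_const.indicator hE1).comp measurable_prodMk_right
    have hmeas2sec : ∀ x : EN N, Measurable fun s : ℝ =>
        E2.indicator (fun _ => (1 : ℝ≥0∞)) (s, x) :=
      fun x => (measurable_const.indicator hE2).comp measurable_prodMk_right
    calc ∫⁻ x, (∫⁻ t in Set.Ioi (0 : ℝ), E1.indicator (fun _ => (1 : ℝ≥0∞)) (t, x))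
          * (∫⁻ s in Set.Ioi (0 : ℝ), E2.indicator (fun _ => (1 : ℝ≥0∞)) (s, x))
        = ∫⁻ x, ∫⁻ t in Set.Ioi (0 : ℝ), ∫⁻ s in Set.Ioi (0 : ℝ),
            E1.indicator (fun _ => (1 : ℝ≥0∞)) (t, x)
              * E2.indicator (fun _ => (1 : ℝ≥0∞)) (s, x) := by
          refine lintegral_congr fun x => ?_
          rw [← lintegral_mul_const _ (hmeas1sec x)]
          refine lintegral_congr fun t => ?_
          rw [← lintegral_const_mul _ (hmeas2sec x)]
      _ = ∫⁻ t in Set.Ioi (0 : ℝ), ∫⁻ x, ∫⁻ s in Set.Ioi (0 : ℝ),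
            E1.indicator (fun _ => (1 : ℝ≥0∞)) (t, x)
              * E2.indicator (fun _ => (1 : ℝ≥0∞)) (s, x) := by
          apply lintegral_lintegral_swap
          apply Measurable.aemeasurable
          apply Measurable.lintegral_prod_right
            (f := fun (p : EN N × ℝ) (s : ℝ) =>
              E1.indicator (fun _ => (1 : ℝ≥0∞)) (p.2, p.1)
                * E2.indicator (fun _ => (1 : ℝ≥0∞)) (s, p.1))
          apply Measurable.mul
          · exact (measurable_const.indicator hE1).comp
              ((measurable_fst.snd).prodMk measurable_fst.fst)
          · exact (measurable_const.indicator hE2).comp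
              (measurable_snd.prodMk measurable_fst.fst)
      _ = ∫⁻ t in Set.Ioi (0 : ℝ), ∫⁻ s in Set.Ioi (0 : ℝ), ∫⁻ x,
            E1.indicator (fun _ => (1 : ℝ≥0∞)) (t, x)
              * E2.indicator (fun _ => (1 : ℝ≥0∞)) (s, x) := by
          refine lintegral_congr fun t => ?_
          apply lintegral_lintegral_swap
          apply Measurable.aemeasurable
          apply Measurable.mul
          · exact (measurable_const.indicator hE1).comp
              (measurable_const.prodMk measurable_fst)
          · exact (measurable_const.indicator hE2).comp
              (measurable_snd.prodMk measurable_fst)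
      _ = ∫⁻ t in Set.Ioi (0 : ℝ), ∫⁻ s in Set.Ioi (0 : ℝ),
            volume (Metric.ball (0 : EN N) (rad u1 v1 t)
              ∩ Metric.ball (0 : EN N) (rad u2 v2 s)) := by
          refine lintegral_congr fun t => lintegral_congr fun s => ?_
          have hprod : ∀ x : EN N,
              E1.indicator (fun _ => (1 : ℝ≥0∞)) (t, x)
                * E2.indicator (fun _ => (1 : ℝ≥0∞)) (s, x)
              = (Metric.ball (0 : EN N) (rad u1 v1 t)
                  ∩ Metric.ball (0 : EN N) (rad u2 v2 s)).indicator
                    (fun _ => (1 : ℝ≥0∞)) x := by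
            intro x
            rw [← hk1 t x, ← hk2 s x]
            by_cases h1 : x ∈ Metric.ball (0 : EN N) (rad u1 v1 t)
              <;> by_cases h2 : x ∈ Metric.ball (0 : EN N) (rad u2 v2 s)
              <;> simp [Set.indicator_apply, h1, h2]
          rw [lintegral_congr hprod,
            lintegral_indicator (measurableSet_ball.inter measurableSet_ball),
            setLIntegral_one]
  -- volume of the intersection of the two balls is the min of the mf's
  have hmin : ∀ {t s : ℝ}, 0 < t → 0 < s →
      volume (Metric.ball (0 : EN N) (rad u1 v1 t)
        ∩ Metric.ball (0 : EN N) (rad u2 v2 s)) = min (mf u1 v1 t) (mf u2 v2 s) := by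
    intro t s ht hs
    have hf1 : mf u1 v1 t ≠ ⊤ := (mf_lt_top hu10 hv10 hu1v hv1v ht).ne
    have hf2 : mf u2 v2 s ≠ ⊤ := (mf_lt_top hu20 hv20 hu2v hv2v hs).ne
    rcases le_total (rad u1 v1 t) (rad u2 v2 s) with h | h
    · rw [Set.inter_eq_left.mpr (ball_subset_ball h), vol_ball_rad hN hf1]
      have : mf u1 v1 t ≤ mf u2 v2 s := by
        rw [← vol_ball_rad hN hf1, ← vol_ball_rad hN hf2]
        exact measure_mono (ball_subset_ball h)
      rw [min_eq_left this]
    · rw [Set.inter_eq_right.mpr (ball_subset_ball h), vol_ball_rad hN hf2]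
      have : mf u2 v2 s ≤ mf u1 v1 t := by
        rw [← vol_ball_rad hN hf1, ← vol_ball_rad hN hf2]
        exact measure_mono (ball_subset_ball h)
      rw [min_eq_right this]
  -- LHS as a double integral
  have hLHS : ∫⁻ x, ENNReal.ofReal (u1 x * u2 x + v1 x * v2 x)
      = ∫⁻ t in Set.Ioi (0 : ℝ), ∫⁻ s in Set.Ioi (0 : ℝ),
          (volume ({x : EN N | s < u2 x} ∩ {x : EN N | t < u1 x})
            + volume ({x : EN N | s < v2 x} ∩ {x : EN N | t < v1 x})) := by
    have hsplit : ∫⁻ x, ENNReal.ofReal (u1 x * u2 x + v1 x * v2 x)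
        = (∫⁻ x, ENNReal.ofReal (u1 x * u2 x)) + ∫⁻ x, ENNReal.ofReal (v1 x * v2 x) := by
      have : ∀ x, ENNReal.ofReal (u1 x * u2 x + v1 x * v2 x)
          = ENNReal.ofReal (u1 x * u2 x) + ENNReal.ofReal (v1 x * v2 x) := fun x =>
        ENNReal.ofReal_add (mul_nonneg (hu10 x) (hu20 x)) (mul_nonneg (hv10 x) (hv20 x))
      rw [lintegral_congr this,
        lintegral_add_left (f := fun x => ENNReal.ofReal (u1 x * u2 x)) (hu1m.mul hu2m).ennreal_ofReal]
    rw [hsplit, lhs_layercake hu10 hu20 hu1m hu2m, lhs_layercake hv10 hv20 hv1m hv2m,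
      ← lintegral_add_left (meas_G_outer hu1m hu2m)]
    refine lintegral_congr fun t => ?_
    rw [← lintegral_add_left
      (f := fun s : ℝ => volume ({x : EN N | s < u2 x} ∩ {x : EN N | t < u1 x}))
      (by exact (meas_G hu1m hu2m).comp measurable_prodMk_left)]
  -- put together
  rw [hLHS, hRHS]
  refine lintegral_mono_ae ?_
  filter_upwards [ae_restrict_mem measurableSet_Ioi] with t ht
  refine lintegral_mono_ae ?_
  filter_upwards [ae_restrict_mem measurableSet_Ioi] with s hs
  rw [hmin ht hs]
  refine le_min ?_ ?_
  · calc volume ({x : EN N | s < u2 x} ∩ {x : EN N | t < u1 x})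
          + volume ({x : EN N | s < v2 x} ∩ {x : EN N | t < v1 x})
        ≤ volume {x : EN N | t < u1 x} + volume {x : EN N | t < v1 x} :=
          add_le_add (measure_mono Set.inter_subset_right)
            (measure_mono Set.inter_subset_right)
      _ = mf u1 v1 t := rfl
  · calc volume ({x : EN N | s < u2 x} ∩ {x : EN N | t < u1 x})
          + volume ({x : EN N | s < v2 x} ∩ {x : EN N | t < v1 x})
        ≤ volume {x : EN N | s < u2 x} + volume {x : EN N | s < v2 x} :=
          add_le_add (measure_mono Set.inter_subset_left)
            (measure_mono Set.inter_subset_left)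
      _ = mf u2 v2 s := rfl
end
end
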